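/- Apply the dqd transform (shift 0) to a positive upper bidiagonal matrix B with intermediate values d_1,…,d_n. Then (∑_{k=1}^n 1/d_k)^{-1} ≤ σ_min(B)², where σ_min(B)² is the smallest eigenvalue of B·Bᵀ. -/

import Mathlib

open Matrix

/-- The `n×n` upper bidiagonal matrix with diagonal `a` and superdiagonal `b`. -/
def upperBidiagonal (n : ℕ) (a b : ℕ → ℝ) : Matrix (Fin n) (Fin n) ℝ :=
  Matrix.of fun i j => if (j : ℕ) = (i : ℕ) then a i
    else if (j : ℕ) = (i : ℕ) + 1 then b i else 0

noncomputable def dqdInv (a b : ℕ → ℝ) : ℕ → ℕ → ℝ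
  | i, 0 => if i = 0 then (a 0)⁻¹ else 0
  | i, j + 1 => if i = j + 1 then (a (j + 1))⁻¹ else -(dqdInv a b i j) * b j / a (j + 1)

lemma dqdInv_diag (a b : ℕ → ℝ) (j : ℕ) : dqdInv a b j j = (a j)⁻¹ := by
  cases j <;> simp [dqdInv]

lemma dqdInv_of_gt (a b : ℕ → ℝ) {i j : ℕ} (h : j < i) : dqdInv a b i j = 0 := by
  induction j with
  | zero =>
    simp only [dqdInv]; rw [if_neg (by omega)]
  | succ j ih =>
    have h1 : i ≠ j + 1 := by omega
    have h2 : j < i := by omega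
    simp [dqdInv, h1, ih h2]

lemma dqdInv_key (a b : ℕ → ℝ) {i j : ℕ} (hij : i < j) (hai : a i ≠ 0) :
    a i * dqdInv a b i j + b i * dqdInv a b (i + 1) j = 0 := by
  induction j with
  | zero => omega
  | succ j ih =>
    by_cases h : i = j
    · subst h
      have h1 : i ≠ i + 1 := by omega
      have e1 : dqdInv a b i (i + 1) = -(a i)⁻¹ * b i / a (i + 1) := by
        simp only [dqdInv]; rw [if_neg h1, dqdInv_diag]
      rw [e1, dqdInv_diag, mul_div_assoc',
        show a i * (-(a i)⁻¹ * b i) = -(a i * (a i)⁻¹) * b i by ring,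
        mul_inv_cancel₀ hai, div_eq_mul_inv]
      ring
    · have hij' : i < j := by omega
      have h1 : i ≠ j + 1 := by omega
      have h2 : i + 1 ≠ j + 1 := by omega
      simp only [dqdInv, if_neg h1, if_neg h2]
      linear_combination (-(b j) / a (j + 1)) * ih hij'

/-- `(∑ 1/d_k)⁻¹` is a lower bound on the smallest eigenvalue of `B*Bᵀ`. -/
theorem dqd_harmonic_lower_bound (n : ℕ) (hn : 0 < n) (a b d : ℕ → ℝ)
    (ha : ∀ k < n, 0 < a k) (hb : ∀ k, k + 1 < n → 0 < b k)
    (hd1 : d 0 = (a 0) ^ 2)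
    (hdk : ∀ k, k + 1 < n → d (k + 1) = d k * (a (k + 1)) ^ 2 / (d k + (b k) ^ 2))
    (hM : (upperBidiagonal n a b * (upperBidiagonal n a b)ᵀ).IsHermitian) :
    (∑ k ∈ Finset.range n, (d k)⁻¹)⁻¹ ≤ ⨅ i, hM.eigenvalues i := by
  haveI : Nonempty (Fin n) := ⟨⟨0, hn⟩⟩
  set B := upperBidiagonal n a b with hBdef
  set C : Matrix (Fin n) (Fin n) ℝ := Matrix.of (fun p q : Fin n => dqdInv a b p q) with hCdef
  -- positivity of d
  have hd_pos : ∀ k, k < n → 0 < d k := by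
    intro k
    induction k with
    | zero => intro _; rw [hd1]; exact pow_pos (ha 0 hn) 2
    | succ k ih =>
      intro hk
      have hdk0 := ih (by omega)
      rw [hdk k hk]
      exact div_pos (mul_pos hdk0 (pow_pos (ha (k + 1) hk) 2))
        (add_pos_of_pos_of_nonneg hdk0 (sq_nonneg _))
  -- B * C = 1
  have hBC : B * C = 1 := by
    ext i j
    rw [Matrix.mul_apply, Matrix.one_apply]
    have hstep : ∀ l : Fin n, B i l * C l j =
        (if (l : ℕ) = (i : ℕ) then a (i : ℕ) * dqdInv a b (i : ℕ) (j : ℕ) else 0) +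
        (if (l : ℕ) = (i : ℕ) + 1 then b (i : ℕ) * dqdInv a b ((i : ℕ) + 1) (j : ℕ) else 0) := by
      intro l
      simp only [hBdef, hCdef, upperBidiagonal, Matrix.of_apply]
      split_ifs with h1 h2 h2
      · omega
      · rw [h1, add_zero]
      · rw [h2, zero_add]
      · rw [zero_mul, add_zero]
    rw [Finset.sum_congr rfl (fun l _ => hstep l), Finset.sum_add_distrib]
    have hs1 : (∑ l : Fin n, if (l : ℕ) = (i : ℕ) then
        a (i : ℕ) * dqdInv a b (i : ℕ) (j : ℕ) else 0)
        = a (i : ℕ) * dqdInv a b (i : ℕ) (j : ℕ) := by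
      simp_rw [Fin.val_eq_val]
      rw [Finset.sum_ite_eq' Finset.univ i
        (fun _ => a (i : ℕ) * dqdInv a b (i : ℕ) (j : ℕ))]
      simp
    have hs2 : (∑ l : Fin n, if (l : ℕ) = (i : ℕ) + 1 then
        b (i : ℕ) * dqdInv a b ((i : ℕ) + 1) (j : ℕ) else 0)
        = if (i : ℕ) + 1 < n then b (i : ℕ) * dqdInv a b ((i : ℕ) + 1) (j : ℕ) else 0 := by
      rw [Fin.sum_univ_eq_sum_range
        (fun m => if m = (i : ℕ) + 1 then b (i : ℕ) * dqdInv a b ((i : ℕ) + 1) (j : ℕ) else 0) n,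
        Finset.sum_ite_eq' (Finset.range n) ((i : ℕ) + 1)
        (fun _ => b (i : ℕ) * dqdInv a b ((i : ℕ) + 1) (j : ℕ))]
      simp [Finset.mem_range]
    rw [hs1, hs2]
    rcases lt_trichotomy (i : ℕ) (j : ℕ) with hlt | heq | hgt
    · -- i < j : row identity gives 0
      have hin : (i : ℕ) + 1 < n := by have := j.isLt; omega
      have hkey := dqdInv_key a b hlt (ne_of_gt (ha (i : ℕ) i.isLt))
      rw [if_pos hin, if_neg (by intro h; exact absurd (Fin.val_eq_val i j |>.mp (by omega)) (by simp [h]; omega))]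
      exact hkey
    · rw [← heq, dqdInv_diag, mul_inv_cancel₀ (ne_of_gt (ha (i : ℕ) i.isLt)),
        dqdInv_of_gt a b (Nat.lt_succ_self _), if_pos (Fin.ext heq)]
      simp
    · have hne : i ≠ j := fun h => absurd hgt (by rw [h]; exact lt_irrefl _)
      rw [dqdInv_of_gt a b hgt, dqdInv_of_gt a b (show (j : ℕ) < (i : ℕ) + 1 by omega),
        if_neg hne]
      simp
  -- column sums of squares of C equal 1/d
  have hsum : ∀ j, j < n → ∑ i ∈ Finset.range (j + 1), (dqdInv a b i j) ^ 2 = (d j)⁻¹ := by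
    intro j
    induction j with
    | zero =>
      intro _
      rw [Finset.sum_range_one, dqdInv_diag, hd1, ← inv_pow]
    | succ j ih =>
      intro hj
      have hj' : j < n := by omega
      have hs := ih hj'
      have hterm : ∀ i ∈ Finset.range (j + 1), (dqdInv a b i (j + 1)) ^ 2
          = (dqdInv a b i j) ^ 2 * (b j) ^ 2 / (a (j + 1)) ^ 2 := by
        intro i hi
        have hine : i ≠ j + 1 := by simp [Finset.mem_range] at hi; omega
        simp only [dqdInv]
        rw [if_neg hine]
        ring
      rw [Finset.sum_range_succ, Finset.sum_congr rfl hterm, dqdInv_diag]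
      simp_rw [div_eq_mul_inv, ← Finset.sum_mul]
      rw [hs, hdk j hj]
      have h1 : d j ≠ 0 := ne_of_gt (hd_pos j hj')
      have h2 : a (j + 1) ≠ 0 := ne_of_gt (ha (j + 1) hj)
      have h3 : d j + b j ^ 2 ≠ 0 :=
        ne_of_gt (add_pos_of_pos_of_nonneg (hd_pos j hj') (sq_nonneg _))
      field_simp
      ring
  have hcol : ∀ j : Fin n, ∑ l : Fin n, (dqdInv a b (l : ℕ) (j : ℕ)) ^ 2 = (d (j : ℕ))⁻¹ := by
    intro j
    rw [Fin.sum_univ_eq_sum_range (fun m => (dqdInv a b m (j : ℕ)) ^ 2) n]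
    rw [← Finset.sum_subset (Finset.range_subset_range.mpr (show (j : ℕ) + 1 ≤ n from j.isLt))
      (fun x _ hx => by
        have hxx : (j : ℕ) < x := by
          rcases Nat.lt_or_ge x ((j : ℕ) + 1) with h | h
          · exact absurd (Finset.mem_range.mpr h) hx
          · omega
        rw [dqdInv_of_gt a b hxx]; ring)]
    exact hsum (j : ℕ) j.isLt
  -- spectral part
  refine le_ciInf fun i => ?_
  set v : Fin n → ℝ := ⇑(hM.eigenvectorBasis i) with hvdef
  have hmv : (B * Bᵀ) *ᵥ v = hM.eigenvalues i • v := hM.mulVec_eigenvectorBasis i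
  have hnorm : ∑ k : Fin n, v k * v k = 1 := by
    have h1 : ‖hM.eigenvectorBasis i‖ = 1 := hM.eigenvectorBasis.orthonormal.1 i
    have h2 : (inner ℝ (hM.eigenvectorBasis i) (hM.eigenvectorBasis i) : ℝ) = 1 := by
      rw [real_inner_self_eq_norm_mul_norm, h1, mul_one]
    simpa only [PiLp.inner_apply, RCLike.inner_apply, conj_trivial] using h2
  set w : Fin n → ℝ := Bᵀ *ᵥ v with hwdef
  have hlam : w ⬝ᵥ w = hM.eigenvalues i := by
    have h3 : v ⬝ᵥ ((B * Bᵀ) *ᵥ v) = hM.eigenvalues i := by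
      rw [hmv, dotProduct_smul]
      simp only [smul_eq_mul, dotProduct, hnorm, mul_one]
    calc w ⬝ᵥ w = v ᵥ* B ⬝ᵥ w := by rw [hwdef, Matrix.mulVec_transpose]
      _ = v ⬝ᵥ B *ᵥ w := (Matrix.dotProduct_mulVec v B w).symm
      _ = v ⬝ᵥ (B * Bᵀ) *ᵥ v := by rw [hwdef, Matrix.mulVec_mulVec]
      _ = hM.eigenvalues i := h3
  have hvw : v = Cᵀ *ᵥ w := by
    rw [hwdef, Matrix.mulVec_mulVec, ← Matrix.transpose_mul, hBC, Matrix.transpose_one,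
      Matrix.one_mulVec]
  have hS : 0 < ∑ k ∈ Finset.range n, (d k)⁻¹ :=
    Finset.sum_pos (fun k hk => inv_pos.mpr (hd_pos k (Finset.mem_range.mp hk)))
      ⟨0, Finset.mem_range.mpr hn⟩
  have key : (1 : ℝ) ≤ (∑ k ∈ Finset.range n, (d k)⁻¹) * hM.eigenvalues i := by
    have hwsq : ∑ l : Fin n, (w l) ^ 2 = hM.eigenvalues i := by
      rw [← hlam]; simp [dotProduct, sq]
    calc (1 : ℝ) = ∑ k : Fin n, (v k) ^ 2 := by
          rw [← hnorm]; simp [sq]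
      _ = ∑ k : Fin n, (∑ l : Fin n, C l k * w l) ^ 2 := by
          rw [hvw]
          simp [Matrix.mulVec, dotProduct, Matrix.transpose_apply]
      _ ≤ ∑ k : Fin n, (∑ l : Fin n, (C l k) ^ 2) * (∑ l : Fin n, (w l) ^ 2) :=
          Finset.sum_le_sum fun k _ => Finset.sum_mul_sq_le_sq_mul_sq _ _ _
      _ = (∑ k : Fin n, ∑ l : Fin n, (C l k) ^ 2) * (∑ l : Fin n, (w l) ^ 2) := by
          rw [Finset.sum_mul]
      _ = (∑ k ∈ Finset.range n, (d k)⁻¹) * hM.eigenvalues i := by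
          rw [hwsq]
          congr 1
          calc (∑ k : Fin n, ∑ l : Fin n, (C l k) ^ 2)
              = ∑ k : Fin n, (d (k : ℕ))⁻¹ := by
                refine Finset.sum_congr rfl fun k _ => ?_
                simpa [hCdef] using hcol k
            _ = ∑ k ∈ Finset.range n, (d k)⁻¹ :=
                Fin.sum_univ_eq_sum_range (fun k => (d k)⁻¹) n
  rw [inv_eq_one_div, div_le_iff₀ hS]
  linarith [key]
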